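/- Let 1/2 ≤ m < 1 and set α = 2−m, m₁ = 2m−1, m₀ = 2m/(3−m). Then for all real x, y with x ≥ 0, y ≥ 1/3, and 3x + (α+1)y = α, the quantity f(x,y) := m₁ + 2 − 2m₀ − (3m₁ + 4 − 4m₀)x − 2y satisfies f(x,y) ≥ 0. Consequently, for exponents s₂ > 3 and l₂ < 3 with 3/s₂ + (α+1)/l₂ = α and 2/s₂ + 1/l₂ < 1, the quantity 2m₀^{(2)} := m₁(s₂−3)/(s₂−2) + 2(1 − s₂/((s₂−2) l₂)) satisfies 2m₀^{(2)} ≥ 2m₀. -/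
import Mathlib


open Real Set

/-- The key algebraic inequality in the second case (`s₂ > 3`, `l₂ < 3`) of the
second method: the affine function
`f(x,y) = m₁ + 2 - 2m₀ - (3m₁ + 4 - 4m₀)x - 2y` is nonnegative on the segment
`{x ≥ 0, y ≥ 1/3, 3x + (α+1)y = α}`, and consequently the exponent
`2m₀⁽²⁾ = m₁(s₂-3)/(s₂-2) + 2(1 - s₂/((s₂-2)l₂))` satisfies `2m₀⁽²⁾ ≥ 2m₀`. -/
theorem second_method_case_l_lt_three
    (m α m₁ m₀ : ℝ) (hm : 1 / 2 ≤ m) (hm' : m < 1)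
    (hα : α = 2 - m) (hm₁ : m₁ = 2 * m - 1) (hm₀ : m₀ = 2 * m / (3 - m)) :
    (∀ x y : ℝ, 0 ≤ x → 1 / 3 ≤ y → 3 * x + (α + 1) * y = α →
      0 ≤ m₁ + 2 - 2 * m₀ - (3 * m₁ + 4 - 4 * m₀) * x - 2 * y) ∧
    (∀ s₂ l₂ : ℝ, 3 < s₂ → 1 ≤ l₂ → l₂ < 3 →
      3 / s₂ + (α + 1) / l₂ = α → 2 / s₂ + 1 / l₂ < 1 →
      2 * m₀ ≤ m₁ * (s₂ - 3) / (s₂ - 2) + 2 * (1 - s₂ / ((s₂ - 2) * l₂))) := by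
  have h3m : (0:ℝ) < 3 - m := by linarith
  have hm₀' : m₀ * (3 - m) = 2 * m := by
    rw [hm₀]; field_simp
  have key : ∀ x y : ℝ, 0 ≤ x → 1 / 3 ≤ y → 3 * x + (α + 1) * y = α →
      0 ≤ m₁ + 2 - 2 * m₀ - (3 * m₁ + 4 - 4 * m₀) * x - 2 * y := by
    intro x y hx hy hline
    subst hα hm₁
    have hx2 : 0 ≤ 1 - 3 * x := by
      nlinarith [mul_le_mul_of_nonneg_left hy h3m.le]
    have hF : 0 ≤ (3 - m) * ((2*m-1) + 2 - 2 * m₀ - (3 * (2*m-1) + 4 - 4 * m₀) * x - 2 * y) := by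
      nlinarith [mul_nonneg (mul_nonneg (by linarith : (0:ℝ) ≤ 2*m-1)
        (by linarith : (0:ℝ) ≤ 1 - m)) hx2, hm₀', hline]
    nlinarith [hF, h3m]
  refine ⟨key, ?_⟩
  intro s₂ l₂ hs hl1 hl3 hline hlt
  have hs0 : (0:ℝ) < s₂ := by linarith
  have hl0 : (0:ℝ) < l₂ := by linarith
  have h1 : (0:ℝ) ≤ 1 / s₂ := by positivity
  have h2 : (1:ℝ)/3 ≤ 1 / l₂ := by
    rw [div_le_div_iff₀ (by norm_num) hl0]; linarith
  have h3 : 3 * (1/s₂) + (α + 1) * (1/l₂) = α := by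
    linear_combination hline
  have hf := key (1/s₂) (1/l₂) h1 h2 h3
  have hs2 : (0:ℝ) < s₂ - 2 := by linarith
  rw [div_add_div _ _ (ne_of_gt hs0) (ne_of_gt hl0)] at hline
  have hge : m₁ * (s₂ - 3) / (s₂ - 2) + 2 * (1 - s₂ / ((s₂ - 2) * l₂)) - 2 * m₀
      = (m₁ + 2 - 2 * m₀ - (3 * m₁ + 4 - 4 * m₀) * (1/s₂) - 2 * (1/l₂)) * (s₂ / (s₂ - 2)) := by
    field_simp
    ring
  nlinarith [mul_nonneg hf (le_of_lt (div_pos hs0 hs2))]
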